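/- Let n ≥ 5 be odd and let φ = (0,0,1) ∈ ℂ³. With B_j := (−1)^j (2|ψ_j⟩⟨ψ_j| − I), one has ⟨φ| Σ_{j=0}^{n-2} B_j B_{j+1} − B_{n-1} B_0 |φ⟩ = 4n·cos(π/n)/(1+cos(π/n)) − n, and this value is strictly greater than n − 2. -/

import Mathlib

open Real Matrix

theorem stmt_4 (n : ℕ) (hn : 5 ≤ n) (hodd : Odd n) (ψ : ℕ → Fin 3 → ℂ)
    (hψ : ∀ j : ℕ, ψ j = (1 / Real.sqrt (1 + Real.cos (π / n)) : ℝ) •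
      (![(Real.cos (j * ((n - 1) * π / n)) : ℂ), (Real.sin (j * ((n - 1) * π / n)) : ℂ),
        (Real.sqrt (Real.cos (π / n)) : ℂ)]))
    (B : ℕ → Matrix (Fin 3) (Fin 3) ℂ)
    (hB : ∀ j : ℕ, B j = ((-1 : ℂ) ^ j) • (2 • Matrix.vecMulVec (ψ j) (star (ψ j)) - 1))
    (φ : Fin 3 → ℂ) (hφ : φ = ![0, 0, 1]) :
    star φ ⬝ᵥ ((∑ j ∈ Finset.range (n - 1), B j * B (j + 1)) - B (n - 1) * B 0).mulVec φ
      = ((4 * n * Real.cos (π / n) / (1 + Real.cos (π / n)) - n : ℝ) : ℂ) ∧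
    (4 * n * Real.cos (π / n) / (1 + Real.cos (π / n)) - n : ℝ) > (n : ℝ) - 2 := by
  have hnR : (5:ℝ) ≤ (n:ℝ) := by exact_mod_cast hn
  have hn0 : (n:ℝ) ≠ 0 := by positivity
  have hcpos : 0 < Real.cos (π / n) := by
    apply Real.cos_pos_of_mem_Ioo
    constructor
    · have h1 : (0:ℝ) < π / n := by positivity
      linarith [Real.pi_pos]
    · rw [div_lt_div_iff₀ (by linarith : (0:ℝ) < (n:ℝ)) (by norm_num : (0:ℝ) < 2)]
      nlinarith [Real.pi_pos]
  set c := Real.cos (π / n) with hc_def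
  have h1c : (0:ℝ) < 1 + c := by linarith
  set α := ((n:ℝ) - 1) * π / n with hα_def
  set s := Real.sqrt (1 + c) with hs_def
  set q := Real.sqrt c with hq_def
  have hss : s * s = 1 + c := Real.mul_self_sqrt h1c.le
  have hqq : q * q = c := Real.mul_self_sqrt hcpos.le
  have hs0 : s ≠ 0 := by positivity
  -- trig adjacency facts
  have hcosα : Real.cos α = -c := by
    have h : α = π - π / n := by rw [hα_def]; field_simp
    rw [h, Real.cos_pi_sub]
  have hadj : ∀ j : ℕ, Real.cos (j * α) * Real.cos ((j+1 : ℕ) * α)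
      + Real.sin (j * α) * Real.sin ((j+1 : ℕ) * α) = -c := by
    intro j
    have h1 : ((j+1 : ℕ) : ℝ) * α - (j : ℝ) * α = α := by push_cast; ring
    have h2 := Real.cos_sub (((j+1 : ℕ) : ℝ) * α) ((j : ℝ) * α)
    rw [h1, hcosα] at h2
    linarith [h2, mul_comm (Real.cos (((j+1:ℕ):ℝ) * α)) (Real.cos ((j:ℝ) * α)),
      mul_comm (Real.sin (((j+1:ℕ):ℝ) * α)) (Real.sin ((j:ℝ) * α))]
  have hlast : Real.cos (((n-1 : ℕ) : ℝ) * α) = -c := by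
    obtain ⟨m, hm⟩ := hodd
    have hmr : (n:ℝ) = 2 * m + 1 := by exact_mod_cast hm
    have hn1 : ((n-1 : ℕ) : ℝ) = (n:ℝ) - 1 := by
      have h1 : 1 ≤ n := by omega
      push_cast [h1]; ring
    have harg : ((n-1 : ℕ) : ℝ) * α = (π / n - π) + (m : ℤ) * (2 * π) := by
      rw [hn1, hα_def]
      field_simp
      linear_combination (n:ℝ) * hmr
    rw [harg, Real.cos_add_int_mul_two_pi, Real.cos_sub_pi]
  -- quadratic form picks the (2,2) entry
  have hquad : ∀ M : Matrix (Fin 3) (Fin 3) ℂ, star φ ⬝ᵥ M.mulVec φ = M 2 2 := by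
    intro M
    subst hφ
    simp [dotProduct, Matrix.mulVec, Fin.sum_univ_three]
  -- entries of B
  have hB20 : ∀ j : ℕ, B j 2 0 = ((-1:ℂ))^j * ((2 * (1/s) * (1/s) * q * Real.cos (j * α) : ℝ) : ℂ) := by
    intro j
    rw [hB, hψ]
    simp only [Matrix.smul_apply, Matrix.sub_apply, Matrix.one_apply, Matrix.vecMulVec_apply,
      Pi.smul_apply, Pi.star_apply, Complex.real_smul, Complex.star_def, Complex.conj_ofReal,
      Matrix.cons_val_zero, Matrix.cons_val_one, Matrix.cons_val_two, Matrix.head_cons,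
      Matrix.vecHead, Matrix.vecTail, Function.comp, Fin.succ, smul_eq_mul]
    norm_num [Fin.ext_iff, ← Complex.cos_conj, ← Complex.sin_conj, Complex.conj_ofReal]
    ring
  have hB02 : ∀ j : ℕ, B j 0 2 = ((-1:ℂ))^j * ((2 * (1/s) * (1/s) * q * Real.cos (j * α) : ℝ) : ℂ) := by
    intro j
    rw [hB, hψ]
    simp only [Matrix.smul_apply, Matrix.sub_apply, Matrix.one_apply, Matrix.vecMulVec_apply,
      Pi.smul_apply, Pi.star_apply, Complex.real_smul, Complex.star_def, Complex.conj_ofReal,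
      Matrix.cons_val_zero, Matrix.cons_val_one, Matrix.cons_val_two, Matrix.head_cons,
      Matrix.vecHead, Matrix.vecTail, Function.comp, Fin.succ, smul_eq_mul]
    norm_num [Fin.ext_iff, ← Complex.cos_conj, ← Complex.sin_conj, Complex.conj_ofReal]
    ring
  have hB21 : ∀ j : ℕ, B j 2 1 = ((-1:ℂ))^j * ((2 * (1/s) * (1/s) * q * Real.sin (j * α) : ℝ) : ℂ) := by
    intro j
    rw [hB, hψ]
    simp only [Matrix.smul_apply, Matrix.sub_apply, Matrix.one_apply, Matrix.vecMulVec_apply,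
      Pi.smul_apply, Pi.star_apply, Complex.real_smul, Complex.star_def, Complex.conj_ofReal,
      Matrix.cons_val_zero, Matrix.cons_val_one, Matrix.cons_val_two, Matrix.head_cons,
      Matrix.vecHead, Matrix.vecTail, Function.comp, Fin.succ, smul_eq_mul]
    norm_num [Fin.ext_iff, ← Complex.cos_conj, ← Complex.sin_conj, Complex.conj_ofReal]
    ring
  have hB12 : ∀ j : ℕ, B j 1 2 = ((-1:ℂ))^j * ((2 * (1/s) * (1/s) * q * Real.sin (j * α) : ℝ) : ℂ) := by
    intro j
    rw [hB, hψ]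
    simp only [Matrix.smul_apply, Matrix.sub_apply, Matrix.one_apply, Matrix.vecMulVec_apply,
      Pi.smul_apply, Pi.star_apply, Complex.real_smul, Complex.star_def, Complex.conj_ofReal,
      Matrix.cons_val_zero, Matrix.cons_val_one, Matrix.cons_val_two, Matrix.head_cons,
      Matrix.vecHead, Matrix.vecTail, Function.comp, Fin.succ, smul_eq_mul]
    norm_num [Fin.ext_iff, ← Complex.cos_conj, ← Complex.sin_conj, Complex.conj_ofReal]
    ring
  have hB22 : ∀ j : ℕ, B j 2 2 = ((-1:ℂ))^j * ((2 * (1/s) * (1/s) * q * q - 1 : ℝ) : ℂ) := by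
    intro j
    rw [hB, hψ]
    simp only [Matrix.smul_apply, Matrix.sub_apply, Matrix.one_apply, Matrix.vecMulVec_apply,
      Pi.smul_apply, Pi.star_apply, Complex.real_smul, Complex.star_def, Complex.conj_ofReal,
      Matrix.cons_val_zero, Matrix.cons_val_one, Matrix.cons_val_two, Matrix.head_cons,
      Matrix.vecHead, Matrix.vecTail, Function.comp, Fin.succ, smul_eq_mul]
    norm_num [Fin.ext_iff, ← Complex.cos_conj, ← Complex.sin_conj, Complex.conj_ofReal]
    push_cast
    ring
  -- product entry
  have hterm : ∀ j k : ℕ, (B j * B k) 2 2 = ((-1:ℂ))^(j+k) *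
      (((2 * (1/s) * (1/s) * q * Real.cos (j * α)) * (2 * (1/s) * (1/s) * q * Real.cos (k * α))
        + (2 * (1/s) * (1/s) * q * Real.sin (j * α)) * (2 * (1/s) * (1/s) * q * Real.sin (k * α))
        + (2 * (1/s) * (1/s) * q * q - 1) * (2 * (1/s) * (1/s) * q * q - 1) : ℝ) : ℂ) := by
    intro j k
    rw [Matrix.mul_apply, Fin.sum_univ_three, hB20 j, hB02 k, hB21 j, hB12 k, hB22 j, hB22 k]
    push_cast
    ring
  -- real value of the entry expression for orthogonal-adjacent pairs
  have hGval : ∀ x y : ℝ, Real.cos x * Real.cos y + Real.sin x * Real.sin y = -c →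
      (2 * (1/s) * (1/s) * q * Real.cos x) * (2 * (1/s) * (1/s) * q * Real.cos y)
        + (2 * (1/s) * (1/s) * q * Real.sin x) * (2 * (1/s) * (1/s) * q * Real.sin y)
        + (2 * (1/s) * (1/s) * q * q - 1) * (2 * (1/s) * (1/s) * q * q - 1)
      = 1 - 4 * c / (1 + c) := by
    intro x y h
    have hq2 : q ^ 2 = c := by rw [sq]; exact hqq
    have hinv : (1/s) * (1/s) = 1/(1+c) := by rw [div_mul_div_comm, one_mul, hss]
    calc (2 * (1/s) * (1/s) * q * Real.cos x) * (2 * (1/s) * (1/s) * q * Real.cos y)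
          + (2 * (1/s) * (1/s) * q * Real.sin x) * (2 * (1/s) * (1/s) * q * Real.sin y)
          + (2 * (1/s) * (1/s) * q * q - 1) * (2 * (1/s) * (1/s) * q * q - 1)
        = 4 * (q^2) * ((1/s) * (1/s))^2 * (Real.cos x * Real.cos y + Real.sin x * Real.sin y)
            + (2 * ((1/s) * (1/s)) * (q^2) - 1)^2 := by ring
      _ = 4 * c * (1/(1+c))^2 * (-c) + (2 * (1/(1+c)) * c - 1)^2 := by rw [hq2, hinv, h]
      _ = 1 - 4 * c / (1 + c) := by field_simp; ring
  -- value of each summand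
  have hsum1 : ∀ j : ℕ, (B j * B (j+1)) 2 2 = ((4 * c / (1 + c) - 1 : ℝ) : ℂ) := by
    intro j
    rw [hterm j (j+1), hGval _ _ (hadj j)]
    have hoddj : Odd (j + (j+1)) := ⟨j, by ring⟩
    rw [hoddj.neg_one_pow]
    push_cast
    ring
  have hlastterm : (B (n-1) * B 0) 2 2 = ((1 - 4 * c / (1 + c) : ℝ) : ℂ) := by
    have h0 : Real.cos (((n-1:ℕ):ℝ) * α) * Real.cos (((0:ℕ):ℝ) * α)
        + Real.sin (((n-1:ℕ):ℝ) * α) * Real.sin (((0:ℕ):ℝ) * α) = -c := by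
      norm_num [hlast]
    rw [hterm (n-1) 0, hGval _ _ h0]
    have heven : Even ((n-1) + 0) := by
      rw [Nat.add_zero]
      exact Nat.Odd.sub_odd hodd odd_one
    rw [heven.neg_one_pow, one_mul]
  constructor
  · rw [hquad, Matrix.sub_apply, Matrix.sum_apply]
    rw [Finset.sum_congr rfl (fun j _ => hsum1 j), Finset.sum_const, Finset.card_range, hlastterm]
    have hn1 : ((n-1 : ℕ) : ℝ) = (n:ℝ) - 1 := by
      have h1 : 1 ≤ n := by omega
      push_cast [h1]; ring
    have h1c' : (1:ℂ) + (c:ℂ) ≠ 0 := by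
      exact_mod_cast Complex.ofReal_ne_zero.mpr h1c.ne'
    rw [nsmul_eq_mul]
    push_cast [hn1]
    field_simp
    rw [Nat.cast_sub (by omega : 1 ≤ n)]; push_cast; ring
  · -- the inequality
    have hπ315 := Real.pi_lt_d2
    have hπpos := Real.pi_pos
    have hb := Real.one_sub_sq_div_two_lt_cos (x := π/n) (ne_of_gt (by positivity))
    have e1 : (π/(n:ℝ))^2/2 ≤ 2/((n:ℝ)+1) := by
      rw [div_le_div_iff₀ (by norm_num) (by linarith : (0:ℝ) < (n:ℝ)+1)]
      rw [div_pow, div_mul_eq_mul_div, div_le_iff₀ (by positivity : (0:ℝ) < (n:ℝ)^2)]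
      have hπ2 : π^2 < 9.9225 := by nlinarith [hπ315, hπpos]
      nlinarith [mul_le_mul_of_nonneg_right hπ2.le (by linarith : (0:ℝ) ≤ (n:ℝ)+1),
        sq_nonneg ((n:ℝ) - 5), hnR]
    have e2 : ((n:ℝ)-1)/((n:ℝ)+1) = 1 - 2/((n:ℝ)+1) := by field_simp; ring
    have key : ((n:ℝ) - 1)/((n:ℝ)+1) < c := by
      rw [e2]
      calc 1 - 2/((n:ℝ)+1) ≤ 1 - (π/n)^2/2 := by linarith
        _ < c := hb
    have key2 : ((n:ℝ) - 1) < c * ((n:ℝ)+1) := by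
      rw [div_lt_iff₀ (by linarith : (0:ℝ) < (n:ℝ)+1)] at key
      exact key
    have h3 : 2*(n:ℝ) - 2 < 4*n*c/(1+c) := by
      rw [lt_div_iff₀ h1c]
      nlinarith [key2, hnR, hcpos]
    linarith
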